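/- Let C ⊆ F_2^m be a linear code of dimension s such that for every coordinate i ∈ {1,...,m} there exist J codewords h_1, ..., h_J of the dual code C^⊥ that are orthogonal on coordinate i, i.e., every h_j has a 1 in position i and the supports of any two distinct h_j, h_{j'} intersect exactly in {i}. Then C is a (J+1)-server PIR code; in particular A(s, J+1) ≤ m. -/

import Mathlib

/-- An `s × m` matrix `G` over `F_2` has property `A_k` if for every `i` there exist
`k` pairwise disjoint subsets of the columns of `G` such that the columns in each
subset sum to the standard basis vector `e_i`. -/
def hasPropertyA (s m k : ℕ) (G : Matrix (Fin s) (Fin m) (ZMod 2)) : Prop :=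
  ∀ i : Fin s, ∃ R : Fin k → Finset (Fin m),
    (∀ j j' : Fin k, j ≠ j' → Disjoint (R j) (R j')) ∧
    ∀ j : Fin k, ∀ r : Fin s, (∑ c ∈ R j, G r c) = if r = i then 1 else 0

/-- `PIRlen s k` = `A(s,k)`: the smallest `m` such that an `s × m` matrix over `F_2`
with property `A_k` exists. -/
noncomputable def PIRlen (s k : ℕ) : ℕ :=
  sInf {m : ℕ | ∃ G : Matrix (Fin s) (Fin m) (ZMod 2), hasPropertyA s m k G}

section Aux

open Module Submodule

variable {K : Type*} [Field K]

/-- If restricting codewords to the coordinates in `T` is injective on `C` and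
`#T` exceeds `finrank C`, then some coordinate of `T` can be removed keeping
injectivity. -/
lemma shrink_coords {m s : ℕ} (C : Submodule K (Fin m → K))
    (hdim : Module.finrank K C = s) (T : Finset (Fin m))
    (hQ : ∀ c ∈ C, (∀ x ∈ T, c x = 0) → c = 0) (hcard : s < T.card) :
    ∃ j0 ∈ T, ∀ c ∈ C, (∀ x ∈ T.erase j0, c x = 0) → c = 0 := by
  classical
  -- the restriction linear map
  set L : C →ₗ[K] (T → K) :=
    (LinearMap.funLeft K K (fun x : T => (x : Fin m))).comp C.subtype with hL
  have hLapp : ∀ (c : C) (x : T), L c x = (c : Fin m → K) x := fun c x => rfl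
  have hinj : Function.Injective L := by
    rw [← LinearMap.ker_eq_bot]
    rw [Submodule.eq_bot_iff]
    intro c hc
    have : (c : Fin m → K) = 0 := by
      refine hQ c c.2 (fun x hx => ?_)
      have := congrFun (LinearMap.mem_ker.mp hc) ⟨x, hx⟩
      simpa [hLapp] using this
    exact Subtype.ext this
  have hW : LinearMap.range L ≠ ⊤ := by
    intro htop
    have h1 : Module.finrank K (LinearMap.range L) = s := by
      rw [LinearMap.finrank_range_of_inj hinj, hdim]
    have h2 : Module.finrank K (T → K) = T.card := by
      simp [Module.finrank_pi, Fintype.card_coe]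
    rw [htop, finrank_top, h2] at h1
    omega
  have hann : (LinearMap.range L).dualAnnihilator ≠ ⊥ := by
    intro hbot
    apply hW
    have := Subspace.dualAnnihilator_inj (W := LinearMap.range L) (W' := ⊤)
    apply this.mp
    rw [hbot, Submodule.dualAnnihilator_top]
  obtain ⟨g, hg, hgne⟩ := Submodule.exists_mem_ne_zero_of_ne_bot hann
  rw [Submodule.mem_dualAnnihilator] at hg
  -- g is determined by its values on the standard basis
  have hgsum : ∀ f : T → K, g f = ∑ x : T, f x * g (Pi.single x 1) := by
    intro f
    conv_lhs => rw [← Finset.univ_sum_single f]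
    rw [map_sum]
    refine Finset.sum_congr rfl (fun x _ => ?_)
    have : (Pi.single x (f x) : T → K) = f x • (Pi.single x (1 : K) : T → K) := by
      rw [← Pi.single_smul, smul_eq_mul, mul_one]
    rw [this, map_smul, smul_eq_mul]
  have hx0 : ∃ x0 : T, g (Pi.single x0 1) ≠ 0 := by
    by_contra hno
    push_neg at hno
    apply hgne
    ext f
    simp [hgsum f, hno]
  obtain ⟨x0, hx0⟩ := hx0
  refine ⟨(x0 : Fin m), x0.2, ?_⟩
  intro c hc hzero
  refine hQ c hc (fun x hx => ?_)
  by_cases hxj : x = (x0 : Fin m)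
  · -- use the annihilating functional
    have hgc : g (L ⟨c, hc⟩) = 0 := hg _ ⟨_, rfl⟩
    rw [hgsum] at hgc
    have hsum : ∑ y : T, (L ⟨c, hc⟩) y * g (Pi.single y 1)
        = c (x0 : Fin m) * g (Pi.single x0 1) := by
      rw [← Finset.sum_subset (Finset.subset_univ {x0})]
      · simp [hLapp]
      · intro y _ hy
        have hyx : (y : Fin m) ∈ T.erase (x0 : Fin m) := by
          refine Finset.mem_erase.mpr ⟨?_, y.2⟩
          intro hcontra
          exact hy (Finset.mem_singleton.mpr (Subtype.ext hcontra))
        have : (L ⟨c, hc⟩) y = 0 := by rw [hLapp]; exact hzero _ hyx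
        rw [this, zero_mul]
    rw [hsum] at hgc
    have := mul_eq_zero.mp hgc
    rcases this with h | h
    · rwa [hxj]
    · exact absurd h hx0
  · exact hzero x (Finset.mem_erase.mpr ⟨hxj, hx⟩)

/-- A finite-dimensional code has a "systematic" basis: a spanning family `b`
indexed by `Fin s` together with positions `p` where `b i (p j) = δᵢⱼ`. -/
lemma exists_systematic {m s : ℕ} (C : Submodule K (Fin m → K))
    (hdim : Module.finrank K C = s) :
    ∃ (b : Fin s → (Fin m → K)) (p : Fin s → Fin m),
      Submodule.span K (Set.range b) = C ∧
      (∀ i, b i ∈ C) ∧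
      (∀ i j : Fin s, b i (p j) = if i = j then 1 else 0) := by
  classical
  -- find a coordinate set of size exactly s on which restriction is injective
  have key : ∀ n (T : Finset (Fin m)), T.card = n →
      (∀ c ∈ C, (∀ x ∈ T, c x = 0) → c = 0) →
      ∃ T' : Finset (Fin m), T'.card = s ∧
        ∀ c ∈ C, (∀ x ∈ T', c x = 0) → c = 0 := by
    intro n
    induction n using Nat.strong_induction_on with
    | _ n ih =>
      intro T hTn hQ
      -- s ≤ T.card
      have hsle : s ≤ T.card := by
        set L : C →ₗ[K] (T → K) :=
          (LinearMap.funLeft K K (fun x : T => (x : Fin m))).comp C.subtype with hL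
        have hinj : Function.Injective L := by
          rw [← LinearMap.ker_eq_bot, Submodule.eq_bot_iff]
          intro c hc
          refine Subtype.ext (hQ c c.2 (fun x hx => ?_))
          have := congrFun (LinearMap.mem_ker.mp hc) ⟨x, hx⟩
          exact this
        have := LinearMap.finrank_le_finrank_of_injective hinj
        rw [hdim] at this
        simpa [Module.finrank_pi, Fintype.card_coe] using this
      rcases eq_or_lt_of_le hsle with heq | hlt
      · exact ⟨T, heq.symm, hQ⟩
      · obtain ⟨j0, hj0T, hQ'⟩ := shrink_coords C hdim T hQ hlt
        have hcard : (T.erase j0).card < n := by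
          rw [Finset.card_erase_of_mem hj0T]; omega
        exact ih _ hcard (T.erase j0) rfl hQ'
  have hQuniv : ∀ c ∈ C, (∀ x ∈ (Finset.univ : Finset (Fin m)), c x = 0) → c = 0 := by
    intro c _ hx
    funext x
    exact hx x (Finset.mem_univ x)
  obtain ⟨T, hTcard, hQ⟩ := key _ Finset.univ rfl hQuniv
  -- the equivalence Fin s ≃ T
  let e : Fin s ≃ T := (Finset.equivFinOfCardEq hTcard).symm
  let p : Fin s → Fin m := fun i => (e i : Fin m)
  -- restriction to the positions p is a linear equivalence
  set L : C →ₗ[K] (Fin s → K) :=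
    (LinearMap.funLeft K K (fun i : Fin s => p i)).comp C.subtype with hL
  have hLapp : ∀ (c : C) (i : Fin s), L c i = (c : Fin m → K) (p i) := fun c i => rfl
  have hinj : Function.Injective L := by
    rw [← LinearMap.ker_eq_bot, Submodule.eq_bot_iff]
    intro c hc
    refine Subtype.ext (hQ c c.2 (fun x hx => ?_))
    have hxp : x = p (e.symm ⟨x, hx⟩) := by simp [p]
    have := congrFun (LinearMap.mem_ker.mp hc) (e.symm ⟨x, hx⟩)
    rw [hxp]
    exact this
  have hfr : Module.finrank K C = Module.finrank K (Fin s → K) := by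
    rw [hdim, Module.finrank_fin_fun]
  let E : C ≃ₗ[K] (Fin s → K) := L.linearEquivOfInjective hinj hfr
  have hEapp : ∀ c : C, E c = L c := fun c =>
    LinearMap.linearEquivOfInjective_apply hinj hfr c
  let b : Fin s → (Fin m → K) := fun i => (E.symm (Pi.single i 1) : Fin m → K)
  refine ⟨b, p, ?_, fun i => (E.symm (Pi.single i 1)).2, ?_⟩
  · -- span = C
    let B : Basis (Fin s) K C := (Pi.basisFun K (Fin s)).map E.symm
    have hrange : Set.range b = C.subtype '' Set.range B := by
      ext v
      constructor
      · rintro ⟨i, rfl⟩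
        exact ⟨B i, ⟨i, rfl⟩, by simp [B, b]⟩
      · rintro ⟨w, ⟨i, rfl⟩, rfl⟩
        exact ⟨i, by simp [B, b]⟩
    rw [hrange, Submodule.span_image, B.span_eq, Submodule.map_subtype_top]
  · intro i j
    have : L (E.symm (Pi.single i 1)) = Pi.single i (1 : K) := by
      rw [← hEapp, E.apply_symm_apply]
    have hval := congrFun this j
    rw [hLapp] at hval
    rw [show b i (p j) = (E.symm (Pi.single i 1) : Fin m → K) (p j) from rfl, hval]
    simp [Pi.single_apply, eq_comm]

end Aux

/-- One-step majority-logic decodable codes are PIR codes: if `C ⊆ F_2^m` has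
dimension `s` and for every coordinate `i` there are `J` dual codewords orthogonal
on `i` (each has a `1` at `i`, and supports of distinct ones meet exactly in `{i}`),
then `C` is a `(J+1)`-server PIR code; in particular `A(s, J+1) ≤ m`. -/
theorem pir_one_step_majority (m s J : ℕ)
    (C : Submodule (ZMod 2) (Fin m → ZMod 2))
    (hdim : Module.finrank (ZMod 2) C = s)
    (horth : ∀ i : Fin m, ∃ h : Fin J → (Fin m → ZMod 2),
      (∀ j : Fin J, ∀ c ∈ C, ∑ t, h j t * c t = 0) ∧
      (∀ j : Fin J, h j i = 1) ∧
      (∀ j j' : Fin J, j ≠ j' → ∀ t : Fin m, h j t ≠ 0 → h j' t ≠ 0 → t = i)) :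
    (∃ G : Matrix (Fin s) (Fin m) (ZMod 2),
      Submodule.span (ZMod 2) (Set.range G) = C ∧ hasPropertyA s m (J + 1) G) ∧
    PIRlen s (J + 1) ≤ m := by
  classical
  have h01 : ∀ x : ZMod 2, x ≠ 0 → x = 1 := by decide
  have hadd : ∀ a b : ZMod 2, a + b = 0 → a = b := by decide
  obtain ⟨b, p, hspan, hmem, hsys⟩ := exists_systematic C hdim
  set G : Matrix (Fin s) (Fin m) (ZMod 2) := fun r c => b r c with hG
  have hGb : Set.range G = Set.range b := rfl
  have hA : hasPropertyA s m (J + 1) G := by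
    intro i
    set q : Fin m := p i with hq
    obtain ⟨h, hdual, hone, hdisj⟩ := horth q
    set S : Fin J → Finset (Fin m) :=
      fun j => (Finset.univ.filter fun x => h j x ≠ 0).erase q with hS
    refine ⟨Fin.cases {q} S, ?_, ?_⟩
    · -- disjointness
      intro j j' hne
      induction j using Fin.cases with
      | zero =>
        induction j' using Fin.cases with
        | zero => exact absurd rfl hne
        | succ k =>
          simp only [Fin.cases_zero, Fin.cases_succ]
          rw [Finset.disjoint_singleton_left]
          exact Finset.notMem_erase q _
      | succ k =>
        induction j' using Fin.cases with
        | zero =>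
          simp only [Fin.cases_zero, Fin.cases_succ]
          rw [Finset.disjoint_singleton_right]
          exact Finset.notMem_erase q _
        | succ k' =>
          simp only [Fin.cases_succ]
          have hkk' : k ≠ k' := fun hcontra => hne (by rw [hcontra])
          rw [Finset.disjoint_left]
          intro x hx hx'
          rw [hS, Finset.mem_erase, Finset.mem_filter] at hx hx'
          exact hx.1 (hdisj k k' hkk' x hx.2.2 hx'.2.2)
    · -- sums
      intro j r
      induction j using Fin.cases with
      | zero =>
        simp only [Fin.cases_zero, Finset.sum_singleton]
        exact hsys r i
      | succ k =>
        simp only [Fin.cases_succ]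
        have hqmem : q ∈ Finset.univ.filter fun x => h k x ≠ 0 := by
          simp [hone k]
        have hsum0 : ∑ c ∈ Finset.univ.filter (fun x => h k x ≠ 0), G r c = 0 := by
          have : ∑ c ∈ Finset.univ.filter (fun x => h k x ≠ 0), G r c
              = ∑ c, h k c * b r c := by
            rw [Finset.sum_filter]
            refine Finset.sum_congr rfl (fun c _ => ?_)
            by_cases hc : h k c = 0
            · simp [hc]
            · rw [if_pos hc, h01 _ hc, one_mul]
          rw [this]
          exact hdual k (b r) (hmem r)
        have := Finset.sum_erase_add (Finset.univ.filter fun x => h k x ≠ 0)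
          (fun c => G r c) hqmem
        rw [hsum0] at this
        have h2 := hadd _ _ this
        exact h2.trans (hsys r i)
  refine ⟨⟨G, ?_, hA⟩, Nat.sInf_le ⟨G, hA⟩⟩
  rw [hGb, hspan]
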